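/- Let a,b be real numbers and define X(x,y,z) = (ax+by+xz, -bx+ay+yz, -2az - x^2 - y^2 - z^2) and Δ(x,y,z) = (-y(x²+y²)(4az + x² + y² + 2z²), x(x²+y²)(4az + x² + y² + 2z²), 0). Then for all (x,y,z) ∈ ℝ³, (DΔ)(x,y,z) · X(x,y,z) - (DX)(x,y,z) · Δ(x,y,z) = 0. -/

import Mathlib

theorem stmt2 (a b : ℝ)
    (X Δ : ℝ × ℝ × ℝ → ℝ × ℝ × ℝ)
    (hX : X = fun p => (a*p.1 + b*p.2.1 + p.1*p.2.2,
                        -b*p.1 + a*p.2.1 + p.2.1*p.2.2,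
                        -2*a*p.2.2 - p.1^2 - p.2.1^2 - p.2.2^2))
    (hΔ : Δ = fun p =>
      (-p.2.1*(p.1^2 + p.2.1^2)*(4*a*p.2.2 + p.1^2 + p.2.1^2 + 2*p.2.2^2),
       p.1*(p.1^2 + p.2.1^2)*(4*a*p.2.2 + p.1^2 + p.2.1^2 + 2*p.2.2^2),
       0)) :
    ∀ p : ℝ × ℝ × ℝ, fderiv ℝ Δ p (X p) - fderiv ℝ X p (Δ p) = 0 := by
  subst hX hΔ
  intro p
  have hx : HasFDerivAt (fun p : ℝ × ℝ × ℝ => p.1) (ContinuousLinearMap.fst ℝ ℝ (ℝ × ℝ)) p :=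
    hasFDerivAt_fst
  have hy : HasFDerivAt (fun p : ℝ × ℝ × ℝ => p.2.1)
      ((ContinuousLinearMap.fst ℝ ℝ ℝ).comp (ContinuousLinearMap.snd ℝ ℝ (ℝ × ℝ))) p :=
    hasFDerivAt_fst.comp p hasFDerivAt_snd
  have hz : HasFDerivAt (fun p : ℝ × ℝ × ℝ => p.2.2)
      ((ContinuousLinearMap.snd ℝ ℝ ℝ).comp (ContinuousLinearMap.snd ℝ ℝ (ℝ × ℝ))) p :=
    hasFDerivAt_snd.comp p hasFDerivAt_snd
  have sq' : ∀ (f : ℝ × ℝ × ℝ → ℝ) (L : (ℝ × ℝ × ℝ) →L[ℝ] ℝ), HasFDerivAt f L p →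
      HasFDerivAt (fun q => f q ^ 2) (f p • L + f p • L) p := by
    intro f L h
    have hfe : (fun q => f q ^ 2) = fun q => f q * f q := by funext q; ring
    rw [hfe]; exact h.mul h
  have hx2 := sq' _ _ hx
  have hy2 := sq' _ _ hy
  have hz2 := sq' _ _ hz
  have hA : HasFDerivAt (fun p : ℝ × ℝ × ℝ => p.1^2 + p.2.1^2) _ p := hx2.add hy2
  have hE : HasFDerivAt
      (fun p : ℝ × ℝ × ℝ => 4*a*p.2.2 + p.1^2 + p.2.1^2 + 2*p.2.2^2) _ p :=
    (((hz.const_mul (4*a)).add hx2).add hy2).add (hz2.const_mul 2)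
  have hXd : HasFDerivAt (fun p : ℝ × ℝ × ℝ =>
      ((a*p.1 + b*p.2.1 + p.1*p.2.2,
        -b*p.1 + a*p.2.1 + p.2.1*p.2.2,
        -2*a*p.2.2 - p.1^2 - p.2.1^2 - p.2.2^2) : ℝ × ℝ × ℝ)) _ p :=
    HasFDerivAt.prodMk (((hx.const_mul a).add (hy.const_mul b)).add (hx.mul hz))
      (HasFDerivAt.prodMk (((hx.const_mul (-b)).add (hy.const_mul a)).add (hy.mul hz))
        ((((hz.const_mul (-2*a)).sub hx2).sub hy2).sub hz2))
  have hΔd : HasFDerivAt (fun p : ℝ × ℝ × ℝ =>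
      ((-p.2.1*(p.1^2 + p.2.1^2)*(4*a*p.2.2 + p.1^2 + p.2.1^2 + 2*p.2.2^2),
        p.1*(p.1^2 + p.2.1^2)*(4*a*p.2.2 + p.1^2 + p.2.1^2 + 2*p.2.2^2),
        (0:ℝ)) : ℝ × ℝ × ℝ)) _ p :=
    HasFDerivAt.prodMk ((hy.neg.mul hA).mul hE) (HasFDerivAt.prodMk ((hx.mul hA).mul hE) (hasFDerivAt_const 0 p))
  rw [hXd.fderiv, hΔd.fderiv]
  simp only [ContinuousLinearMap.prod_apply, ContinuousLinearMap.add_apply,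
    ContinuousLinearMap.sub_apply, ContinuousLinearMap.smul_apply,
    ContinuousLinearMap.neg_apply, ContinuousLinearMap.comp_apply,
    ContinuousLinearMap.coe_fst', ContinuousLinearMap.coe_snd',
    ContinuousLinearMap.zero_apply, smul_eq_mul, Prod.mk_sub_mk, Prod.mk_eq_zero,
    Pi.mul_apply, Pi.neg_apply]
  refine ⟨?_, ?_, ?_⟩ <;> ring
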